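/- Let Φ be a possibly reducible crystallographic root system with irreducible components Φ_1,…,Φ_k. A proper face F of the root polytope P of Φ has dimension dim F = k − 1 + Σ_{i=1}^k dim(F ∩ E_i), where the empty face has dimension −1. -/

import Mathlib

open scoped RealInnerProductSpace
attribute [local instance] Classical.propDecidable
set_option linter.unusedSectionVars false
set_option maxHeartbeats 1000000

variable {E : Type*} [NormedAddCommGroup E] [InnerProductSpace ℝ E] [FiniteDimensional ℝ E]

/-- A finite reduced crystallographic root system spanning `E`. -/
structure IsRootSystem (Φ : Finset E) : Prop where
  nonzero : ∀ γ ∈ Φ, γ ≠ (0 : E)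
  span_top : Submodule.span ℝ (Φ : Set E) = ⊤
  reduced : ∀ γ ∈ Φ, ∀ t : ℝ, t • γ ∈ Φ → t = 1 ∨ t = -1
  reflect : ∀ γ ∈ Φ, ∀ δ ∈ Φ, δ - (2 * ⟪δ, γ⟫ / ⟪γ, γ⟫) • γ ∈ Φ
  cry : ∀ γ ∈ Φ, ∀ δ ∈ Φ, ∃ n : ℤ, 2 * ⟪δ, γ⟫ / ⟪γ, γ⟫ = (n : ℝ)

/-- Irreducibility of a set of roots: no splitting into two nonempty mutually
orthogonal parts. -/
def IsIrredSet (s : Set E) : Prop :=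
  ∀ t : Set E, t ⊆ s → (∀ x ∈ t, ∀ y ∈ s \ t, ⟪x, y⟫ = 0) → t = ∅ ∨ t = s

/-- A face of the polytope `P`: a convex extreme subset. -/
def IsFace (P F : Set E) : Prop := IsExtreme ℝ P F ∧ Convex ℝ F

/-- The barycenter of the vertex set (the roots lying on the face `F`). -/
noncomputable def bary (Φ : Finset E) (F : Set E) : E :=
  Finset.centroid ℝ (Φ.filter (· ∈ F)) id

/-- The dimension of a (possibly empty) face: `-1` for the empty face, otherwise the
dimension of its affine hull. -/
noncomputable def edim (F : Set E) : ℤ :=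
  if F = ∅ then -1 else (Module.finrank ℝ (vectorSpan ℝ F) : ℤ)


section AuxLemmas

/-- Contributors of a convex combination lying in an extreme set belong to the extreme set. -/
lemma aux_extreme_mem {P F : Set E} (hPF : IsExtreme ℝ P F) (hP : Convex ℝ P)
    {ι : Type*} {t : Finset ι} {w : ι → ℝ} {g : ι → E}
    (hw0 : ∀ i ∈ t, 0 ≤ w i) (hw1 : ∑ i ∈ t, w i = 1) (hg : ∀ i ∈ t, g i ∈ P)
    (hx : ∑ i ∈ t, w i • g i ∈ F) {i : ι} (hi : i ∈ t) (hwi : 0 < w i) : g i ∈ F := by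
  classical
  have hsplit : w i • g i + ∑ j ∈ t.erase i, w j • g j = ∑ j ∈ t, w j • g j :=
    Finset.add_sum_erase _ (fun j => w j • g j) hi
  have hr : w i + ∑ j ∈ t.erase i, w j = 1 := by
    rw [Finset.add_sum_erase _ w hi]; exact hw1
  set r := ∑ j ∈ t.erase i, w j with hrdef
  have hr0 : 0 ≤ r := Finset.sum_nonneg fun j hj => hw0 j (Finset.mem_of_mem_erase hj)
  rcases eq_or_lt_of_le hr0 with hr0' | hr0'
  · have hz : ∀ j ∈ t.erase i, w j = 0 := by
      intro j hj
      have := (Finset.sum_eq_zero_iff_of_nonneg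
        (fun j hj => hw0 j (Finset.mem_of_mem_erase hj))).1 hr0'.symm
      exact this j hj
    have hwi1 : w i = 1 := by rw [← hr, ← hr0', add_zero]
    have : ∑ j ∈ t, w j • g j = g i := by
      rw [← hsplit, Finset.sum_eq_zero (fun j hj => by rw [hz j hj, zero_smul]), add_zero,
        hwi1, one_smul]
    rwa [this] at hx
  · set y := (t.erase i).centerMass w g with hy
    have hyP : y ∈ P := by
      rw [← hP.convexHull_eq]
      exact Finset.centerMass_mem_convexHull _
        (fun j hj => hw0 j (Finset.mem_of_mem_erase hj)) hr0' (fun j hj => hg j (Finset.mem_of_mem_erase hj))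
    have hysum : r • y = ∑ j ∈ t.erase i, w j • g j := by
      rw [hy, Finset.centerMass, ← hrdef, smul_smul, mul_inv_cancel₀ (ne_of_gt hr0'), one_smul]
    have hseg : ∑ j ∈ t, w j • g j ∈ openSegment ℝ (g i) y :=
      ⟨w i, r, hwi, hr0', hr, by rw [hysum, hsplit]⟩
    exact hPF.2 (hg i hi) hyP hx hseg

/-- If `0` is an affine combination of points of an extreme subset `F` of `P ∋ 0`, then `0 ∈ F`. -/
lemma aux_zero_mem {P F : Set E} (hPF : IsExtreme ℝ P F) (hFc : Convex ℝ F)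
    (h0P : (0 : E) ∈ P) {ι : Type*} {t : Finset ι} {d : ι → ℝ} {g : ι → E}
    (hg : ∀ i ∈ t, g i ∈ F) (hd1 : ∑ i ∈ t, d i = 1)
    (hsum : ∑ i ∈ t, d i • g i = 0) : (0 : E) ∈ F := by
  classical
  set tp := t.filter (fun i => 0 < d i) with htp
  set tn := t.filter (fun i => ¬ 0 < d i) with htn
  set a := ∑ i ∈ tp, d i with ha
  set b := ∑ i ∈ tn, -d i with hb
  have hsplitd := Finset.sum_filter_add_sum_filter_not t (fun i => 0 < d i) d
  rw [hd1] at hsplitd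
  have hbneg : b = - ∑ i ∈ tn, d i := by rw [hb]; simp
  have hab : a - b = 1 := by rw [hbneg]; rw [← htp, ← htn] at hsplitd; linarith
  have hb0 : 0 ≤ b := Finset.sum_nonneg fun i hi =>
    neg_nonneg.2 (le_of_not_gt (Finset.mem_filter.1 hi).2)
  have ha1 : (1:ℝ) ≤ a := by linarith
  have ha0 : 0 < a := by linarith
  have hvec : ∑ i ∈ tp, d i • g i = ∑ i ∈ tn, (-d i) • g i := by
    have h := Finset.sum_filter_add_sum_filter_not t (fun i => 0 < d i) (fun i => d i • g i)
    rw [hsum] at h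
    have : ∑ i ∈ tn, (-d i) • g i = - ∑ i ∈ tn, d i • g i := by
      simp [neg_smul]
    rw [this, eq_neg_iff_add_eq_zero]
    exact h
  have hgp : ∀ i ∈ tp, g i ∈ F := fun i hi => hg i (Finset.mem_filter.1 hi).1
  have hgn : ∀ i ∈ tn, g i ∈ F := fun i hi => hg i (Finset.mem_filter.1 hi).1
  have hpF : a⁻¹ • ∑ i ∈ tp, d i • g i ∈ F := by
    rw [← hFc.convexHull_eq]
    have := Finset.centerMass_mem_convexHull tp
      (fun i hi => le_of_lt (Finset.mem_filter.1 hi).2) (by rw [← ha]; exact ha0) hgp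
    rwa [Finset.centerMass] at this
  rcases eq_or_lt_of_le hb0 with hbz | hbz
  · have hz : ∀ i ∈ tn, -d i = 0 := by
      intro i hi
      exact (Finset.sum_eq_zero_iff_of_nonneg (fun i hi =>
        neg_nonneg.2 (le_of_not_gt (Finset.mem_filter.1 hi).2))).1 hbz.symm i hi
    have : ∑ i ∈ tp, d i • g i = 0 := by
      rw [hvec]
      exact Finset.sum_eq_zero fun i hi => by rw [hz i hi, zero_smul]
    rw [this, smul_zero] at hpF
    exact hpF
  · set q := b⁻¹ • ∑ i ∈ tn, (-d i) • g i with hq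
    have hqF : q ∈ F := by
      rw [← hFc.convexHull_eq]
      have := Finset.centerMass_mem_convexHull tn (w := fun i => -d i)
        (fun i hi => neg_nonneg.2 (le_of_not_gt (Finset.mem_filter.1 hi).2))
        (by rw [← hb]; exact hbz) hgn
      rwa [Finset.centerMass] at this
    have hseg : a⁻¹ • ∑ i ∈ tp, d i • g i ∈ openSegment ℝ q (0 : E) := by
      refine ⟨b / a, a⁻¹, div_pos hbz ha0, inv_pos.2 ha0, by field_simp; linarith, ?_⟩
      rw [smul_zero, add_zero, hq, smul_smul, hvec]
      congr 1
      field_simp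
    exact hPF.right_mem_of_mem_openSegment (hPF.1 hqF) h0P hpF hseg

lemma aux_neg_mem {Φ : Finset E} (hΦ : IsRootSystem Φ) {γ : E} (hγ : γ ∈ Φ) : -γ ∈ Φ := by
  have h := hΦ.reflect γ hγ γ hγ
  have hne : ⟪γ, γ⟫ ≠ 0 := by
    simpa [real_inner_self_eq_norm_sq] using
      pow_ne_zero 2 (norm_ne_zero_iff.2 (hΦ.nonzero γ hγ))
  rw [mul_div_assoc, div_self hne, mul_one] at h
  have : γ - (2:ℝ) • γ = -γ := by
    rw [two_smul]; abel
  rwa [this] at h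

lemma aux_zero_mem_hull {Φ : Finset E} (hΦ : IsRootSystem Φ) {γ : E} (hγ : γ ∈ Φ) :
    (0 : E) ∈ convexHull ℝ (Φ : Set E) := by
  have h1 : γ ∈ convexHull ℝ (Φ : Set E) := subset_convexHull ℝ _ hγ
  have h2 : -γ ∈ convexHull ℝ (Φ : Set E) := subset_convexHull ℝ _ (by
    exact_mod_cast aux_neg_mem hΦ hγ)
  have := (convex_convexHull ℝ (Φ : Set E)) h1 h2 (by norm_num : (0:ℝ) ≤ 1/2)
    (by norm_num : (0:ℝ) ≤ 1/2) (by norm_num)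
  simpa using this

/-- If an extreme subset of the root polytope contains `0`, it is everything. -/
lemma aux_eq_of_zero_mem {Φ : Finset E} (hΦ : IsRootSystem Φ) {F : Set E}
    (hext : IsExtreme ℝ (convexHull ℝ (Φ : Set E)) F) (h0 : (0 : E) ∈ F) :
    F = convexHull ℝ (Φ : Set E) := by
  refine Set.Subset.antisymm hext.1 fun x hx => ?_
  by_cases hx0 : x = 0
  · rwa [hx0]
  · have hnegΦ : (-(Φ : Set E)) = (Φ : Set E) := by
      ext y
      constructor
      · rintro hy
        rw [Set.mem_neg] at hy
        have := aux_neg_mem hΦ (by exact_mod_cast hy)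
        simpa using this
      · intro hy
        rw [Set.mem_neg]
        exact_mod_cast aux_neg_mem hΦ (by exact_mod_cast hy)
    have hxneg : -x ∈ convexHull ℝ (Φ : Set E) := by
      rw [← hnegΦ, convexHull_neg]
      exact Set.neg_mem_neg.2 hx
    have hseg : (0 : E) ∈ openSegment ℝ x (-x) :=
      ⟨1/2, 1/2, by norm_num, by norm_num, by norm_num, by simp⟩
    exact hext.2 hx hxneg h0 hseg

lemma aux_finrank_span {s : Set E} {v : E} (hv : v ∈ s) (hv0 : v ≠ 0)
    (hvs : v ∉ vectorSpan ℝ s) :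
    Module.finrank ℝ (Submodule.span ℝ s) = Module.finrank ℝ (vectorSpan ℝ s) + 1 := by
  have hsup : Submodule.span ℝ s = vectorSpan ℝ s ⊔ Submodule.span ℝ {v} := by
    apply le_antisymm
    · rw [Submodule.span_le]
      intro x hx
      have h1 : x - v ∈ vectorSpan ℝ s := by
        have := vsub_mem_vectorSpan ℝ hx hv
        rwa [vsub_eq_sub] at this
      have : x = (x - v) + v := by abel
      rw [this]
      exact Submodule.add_mem _ (Submodule.mem_sup_left h1)
        (Submodule.mem_sup_right (Submodule.subset_span rfl))
    · apply sup_le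
      · rw [vectorSpan, Submodule.span_le]
        rintro p ⟨a, ha, b, hb, rfl⟩
        exact Submodule.sub_mem _ (Submodule.subset_span ha) (Submodule.subset_span hb)
      · exact Submodule.span_mono (Set.singleton_subset_iff.2 hv)
  have hinf : vectorSpan ℝ s ⊓ Submodule.span ℝ {v} = ⊥ := by
    rw [eq_bot_iff]
    rintro x ⟨hx1, hx2⟩
    obtain ⟨c, rfl⟩ := Submodule.mem_span_singleton.1 hx2
    rcases eq_or_ne c 0 with rfl | hc
    · simp
    · exfalso
      exact hvs (by
        have := Submodule.smul_mem (vectorSpan ℝ s) c⁻¹ hx1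
        rwa [smul_smul, inv_mul_cancel₀ hc, one_smul] at this)
  have h := Submodule.finrank_sup_add_finrank_inf_eq (vectorSpan ℝ s) (Submodule.span ℝ {v})
  rw [hinf, finrank_bot, add_zero, finrank_span_singleton hv0] at h
  rw [hsup, h]

lemma aux_finrank_sup {k : ℕ} (W : Fin k → Submodule ℝ E)
    (h : ∀ i j, i ≠ j → ∀ x ∈ W i, ∀ y ∈ W j, ⟪x, y⟫ = 0) (s : Finset (Fin k)) :
    Module.finrank ℝ ↥(s.sup W) = ∑ i ∈ s, Module.finrank ℝ ↥(W i) := by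
  classical
  induction s using Finset.cons_induction with
  | empty => simp [finrank_bot]
  | cons a s ha ih =>
    rw [Finset.sup_cons, Finset.sum_cons, ← ih]
    have hdisj : W a ⊓ s.sup W = ⊥ := by
      have hle : s.sup W ≤ (W a)ᗮ := by
        refine Finset.sup_le fun i hi => ?_
        intro y hy
        rw [Submodule.mem_orthogonal]
        intro u hu
        exact h a i (fun e => ha (e ▸ hi)) u hu y hy
      rw [eq_bot_iff]
      intro x hx
      exact (Submodule.orthogonal_disjoint (W a)).le_bot ⟨hx.1, hle hx.2⟩
    have hh := Submodule.finrank_sup_add_finrank_inf_eq (W a) (s.sup W)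
    rw [hdisj, finrank_bot, add_zero] at hh
    exact hh

end AuxLemmas

/-- Dimension formula for a proper face of the root polytope of a root system with
irreducible components `Φ ∩ Eᵢ`: `dim F = k - 1 + Σᵢ dim (F ∩ Eᵢ)`. -/
theorem stmt3 (k : ℕ) (Esub : Fin k → Submodule ℝ E) (Φ : Finset E)
    (hΦ : IsRootSystem Φ)
    (horth : ∀ i j, i ≠ j → ∀ x ∈ Esub i, ∀ y ∈ Esub j, ⟪x, y⟫ = 0)
    (hspan : ∀ i, Submodule.span ℝ ((Φ : Set E) ∩ (Esub i : Set E)) = Esub i)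
    (hcover : (Φ : Set E) = ⋃ i, ((Φ : Set E) ∩ (Esub i : Set E)))
    (hne : ∀ i, ((Φ : Set E) ∩ (Esub i : Set E)).Nonempty)
    (hirr : ∀ i, IsIrredSet ((Φ : Set E) ∩ (Esub i : Set E)))
    (F : Set E) (hF : IsFace (convexHull ℝ (Φ : Set E)) F)
    (hproper : F ≠ convexHull ℝ (Φ : Set E)) :
    edim F = (k : ℤ) - 1 + ∑ i : Fin k, edim (F ∩ (Esub i : Set E)) := by
  classical
  have hext := hF.1
  have hFP : F ⊆ convexHull ℝ (Φ : Set E) := hext.1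
  by_cases hFe : F = ∅
  · have h1 : edim F = -1 := by rw [edim, if_pos hFe]
    have h2 : ∀ i : Fin k, edim (F ∩ (Esub i : Set E)) = -1 := by
      intro i
      rw [edim, if_pos (by rw [hFe]; simp)]
    rw [h1, Finset.sum_congr rfl (fun i _ => h2 i), Finset.sum_const, Finset.card_univ,
      Fintype.card_fin, nsmul_eq_mul]
    ring
  · set V : Finset E := Φ.filter (· ∈ F) with hVdef
    have hVΦ : V ⊆ Φ := Finset.filter_subset _ _
    have hVF : (V : Set E) ⊆ F := by
      intro v hv
      rw [Finset.mem_coe, hVdef, Finset.mem_filter] at hv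
      exact hv.2
    -- F equals the convex hull of the roots on F
    have hFV : F = convexHull ℝ (V : Set E) := by
      apply Set.Subset.antisymm
      · intro x hx
        have hxP := hFP hx
        rw [Finset.convexHull_eq] at hxP
        obtain ⟨w, hw0, hw1, hxc⟩ := hxP
        have hxsum : ∑ y ∈ Φ, w y • y = x := by
          rw [← hxc, Finset.centerMass_eq_of_sum_1 _ _ hw1]
          simp
        have hmemF : ∀ y ∈ Φ, 0 < w y → y ∈ F := by
          intro y hy hwy
          have := aux_extreme_mem hext (convex_convexHull ℝ _) (g := id) hw0 hw1
            (fun z hz => subset_convexHull ℝ _ hz) (by simpa [hxsum] using hx) hy hwy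
          simpa using this
        set t' := Φ.filter (fun y => w y ≠ 0) with ht'
        have ht'V : ∀ y ∈ t', y ∈ V := by
          intro y hy
          rw [ht', Finset.mem_filter] at hy
          have hwy : 0 < w y := lt_of_le_of_ne (hw0 y hy.1) (Ne.symm hy.2)
          rw [hVdef, Finset.mem_filter]
          exact ⟨hy.1, hmemF y hy.1 hwy⟩
        have hsum' : ∑ y ∈ t', w y = 1 := by
          rw [ht', Finset.sum_filter_ne_zero]
          exact hw1
        have hmass := Finset.centerMass_mem_convexHull t'
          (fun y hy => hw0 y (Finset.mem_filter.1 hy).1)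
          (by rw [hsum']; norm_num) (fun y hy => Finset.mem_coe.2 (ht'V y hy))
        rw [ht', Finset.centerMass_filter_ne_zero] at hmass
        rw [← hxc]
        exact hmass
      · exact convexHull_min hVF hF.2
    have hVne : V.Nonempty := by
      rw [Finset.nonempty_iff_ne_empty]
      intro hVemp
      rw [hVemp] at hFV
      simp at hFV
      exact hFe hFV
    obtain ⟨v0, hv0⟩ := hVne
    have h0F : (0 : E) ∉ F := fun h0 => hproper (aux_eq_of_zero_mem hΦ hext h0)
    -- components
    have huniq : ∀ v ∈ Φ, ∀ i j, v ∈ Esub i → v ∈ Esub j → i = j := by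
      intro v hv i j hi hj
      by_contra hij
      exact hΦ.nonzero v hv (inner_self_eq_zero.1 (horth i j hij v hi v hj))
    have hexists : ∀ v ∈ Φ, ∃ i, v ∈ Esub i := by
      intro v hv
      have hv' : (v : E) ∈ ⋃ i, ((Φ : Set E) ∩ (Esub i : Set E)) := by
        rw [← hcover]; exact hv
      obtain ⟨i, hvi⟩ := Set.mem_iUnion.1 hv'
      exact ⟨i, hvi.2⟩
    set Vi : Fin k → Finset E := fun i => V.filter (· ∈ Esub i) with hVidef
    have hViV : ∀ i, Vi i ⊆ V := fun i => Finset.filter_subset _ _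
    -- the slices of F are the convex hulls of the component vertex sets
    have hFi : ∀ i, F ∩ (Esub i : Set E) = convexHull ℝ ((Vi i : Set E)) := by
      intro i
      apply Set.Subset.antisymm
      · rintro x ⟨hxF, hxE⟩
        have hx' : x ∈ convexHull ℝ (V : Set E) := hFV ▸ hxF
        rw [Finset.convexHull_eq] at hx'
        obtain ⟨w, hw0, hw1, hxc⟩ := hx'
        set t' := V.filter (fun y => w y ≠ 0) with ht'
        have ht'pos : ∀ y ∈ t', 0 < w y := by
          intro y hy
          rw [ht', Finset.mem_filter] at hy
          exact lt_of_le_of_ne (hw0 y hy.1) (Ne.symm hy.2)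
        have ht'V : t' ⊆ V := Finset.filter_subset _ _
        have hsum' : ∑ y ∈ t', w y = 1 := by
          rw [ht', Finset.sum_filter_ne_zero]; exact hw1
        have hxt' : ∑ y ∈ t', w y • y = x := by
          rw [← hxc, ← Finset.centerMass_filter_ne_zero (z := id), ← ht',
            Finset.centerMass_eq_of_sum_1 _ _ hsum']
          simp
        set pj : Fin k → E := fun j => ∑ y ∈ t'.filter (· ∈ Esub j), w y • y with hpj
        have hpjE : ∀ j, pj j ∈ Esub j := by
          intro j
          exact Submodule.sum_mem _ fun y hy =>
            Submodule.smul_mem _ _ (Finset.mem_filter.1 hy).2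
        have hxdecomp : ∑ j : Fin k, pj j = x := by
          rw [← hxt']
          have key : ∀ y ∈ t', ∑ j : Fin k, (if y ∈ Esub j then w y • y else 0) = w y • y := by
            intro y hy
            have hyΦ : y ∈ Φ := hVΦ (ht'V hy)
            obtain ⟨i0, hi0⟩ := hexists y hyΦ
            rw [Finset.sum_eq_single i0]
            · rw [if_pos hi0]
            · intro j _ hj
              exact if_neg (fun hyj => hj (huniq y hyΦ j i0 hyj hi0))
            · intro h
              exact absurd (Finset.mem_univ i0) h
          calc ∑ j : Fin k, pj j
              = ∑ j : Fin k, ∑ y ∈ t', (if y ∈ Esub j then w y • y else 0) := by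
                refine Finset.sum_congr rfl fun j _ => ?_
                show ∑ y ∈ t'.filter (· ∈ Esub j), w y • y = _
                rw [Finset.sum_filter]
            _ = ∑ y ∈ t', ∑ j : Fin k, (if y ∈ Esub j then w y • y else 0) :=
                Finset.sum_comm
            _ = ∑ y ∈ t', w y • y := Finset.sum_congr rfl key
        have hpj0 : ∀ j, j ≠ i → pj j = 0 := by
          intro j hj
          have h1 : ⟪pj j, x⟫ = 0 := horth j i hj _ (hpjE j) x hxE
          have h2 : ⟪pj j, x⟫ = ⟪pj j, pj j⟫ := by
            rw [← hxdecomp, inner_sum]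
            rw [Finset.sum_eq_single j]
            · intro l _ hl
              exact horth j l (Ne.symm hl) _ (hpjE j) _ (hpjE l)
            · intro h
              exact absurd (Finset.mem_univ j) h
          rw [h1] at h2
          exact inner_self_eq_zero.1 h2.symm
        have htj : ∀ j, j ≠ i → t'.filter (· ∈ Esub j) = ∅ := by
          intro j hj
          by_contra hne'
          obtain ⟨y0, hy0⟩ := Finset.nonempty_iff_ne_empty.2 hne'
          have hμ : 0 < ∑ y ∈ t'.filter (· ∈ Esub j), w y :=
            Finset.sum_pos' (fun y hy => le_of_lt (ht'pos y (Finset.mem_filter.1 hy).1))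
              ⟨y0, hy0, ht'pos y0 (Finset.mem_filter.1 hy0).1⟩
          have hmass := Finset.centerMass_mem_convexHull (t'.filter (· ∈ Esub j)) (z := id)
            (fun y hy => le_of_lt (ht'pos y (Finset.mem_filter.1 hy).1)) hμ
            (fun y hy => hVF (Finset.mem_coe.2 (ht'V (Finset.mem_filter.1 hy).1)))
          have hpjz : (t'.filter (· ∈ Esub j)).centerMass w id = 0 := by
            rw [Finset.centerMass]
            have hid : ∑ y ∈ t'.filter (· ∈ Esub j), w y • id y = pj j := rfl
            rw [hid, hpj0 j hj, smul_zero]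
          rw [hpjz, hF.2.convexHull_eq] at hmass
          exact h0F hmass
        have ht'i : ∀ y ∈ t', y ∈ Esub i := by
          intro y hy
          obtain ⟨i0, hi0⟩ := hexists y (hVΦ (ht'V hy))
          rcases eq_or_ne i0 i with rfl | hne'
          · exact hi0
          · exfalso
            have : y ∈ t'.filter (· ∈ Esub i0) := Finset.mem_filter.2 ⟨hy, hi0⟩
            rw [htj i0 hne'] at this
            exact absurd this (Finset.notMem_empty y)
        have hmass := Finset.centerMass_mem_convexHull t'
          (fun y hy => hw0 y (ht'V hy)) (by rw [hsum']; norm_num)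
          (fun y hy => Finset.mem_coe.2 (Finset.mem_filter.2 ⟨ht'V hy, ht'i y hy⟩)
            : ∀ y ∈ t', (id y : E) ∈ (Vi i : Set E))
        rw [ht', Finset.centerMass_filter_ne_zero] at hmass
        rw [← hxc]
        exact hmass
      · refine convexHull_min ?_ ((hF.2).inter (Esub i).convex)
        intro y hy
        rw [Finset.mem_coe, hVidef, Finset.mem_filter] at hy
        exact ⟨hVF (Finset.mem_coe.2 hy.1), hy.2⟩
    -- V is the union of the component vertex sets
    have hVunion : (V : Set E) = ⋃ j, ((Vi j : Set E)) := by
      ext v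
      constructor
      · intro hv
        obtain ⟨i0, hi0⟩ := hexists v (hVΦ (Finset.mem_coe.1 hv))
        exact Set.mem_iUnion.2 ⟨i0, Finset.mem_coe.2
          (Finset.mem_filter.2 ⟨Finset.mem_coe.1 hv, hi0⟩)⟩
      · intro hv
        obtain ⟨j, hj⟩ := Set.mem_iUnion.1 hv
        exact Finset.mem_coe.2 (hViV j (Finset.mem_coe.1 hj))
    -- no vertex is in the vector span of the vertex set
    have hnotvs : ∀ v ∈ V, v ∉ vectorSpan ℝ (V : Set E) := by
      intro v hv hvs
      have h0aff : (0 : E) ∈ affineSpan ℝ (V : Set E) := by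
        have hneg : -v ∈ vectorSpan ℝ (V : Set E) := neg_mem hvs
        have := AffineSubspace.vadd_mem_of_mem_direction
          (by rw [direction_affineSpan]; exact hneg)
          (mem_affineSpan ℝ (Finset.mem_coe.2 hv))
        simpa using this
      have h0aff' : (0 : E) ∈ affineSpan ℝ (Set.range (fun y : {x // x ∈ V} => (y : E))) := by
        have : Set.range (fun y : {x // x ∈ V} => (y : E)) = (V : Set E) := by
          rw [Subtype.range_coe_subtype]
          ext z
          simp [Finset.mem_coe]
        rwa [this]
      obtain ⟨s, wgt, hwgt, h0c⟩ := eq_affineCombination_of_mem_affineSpan h0aff'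
      rw [Finset.affineCombination_eq_linear_combination s _ wgt hwgt] at h0c
      exact h0F (aux_zero_mem hext hF.2 (aux_zero_mem_hull hΦ (hVΦ hv0))
        (fun y _ => hVF (Finset.mem_coe.2 y.2)) hwgt h0c.symm)
    -- the component spans
    set W : Fin k → Submodule ℝ E := fun j => Submodule.span ℝ ((Vi j : Set E)) with hWdef
    have hWE : ∀ j, W j ≤ Esub j := by
      intro j
      rw [hWdef]
      refine Submodule.span_le.2 fun y hy => ?_
      exact (Finset.mem_filter.1 (Finset.mem_coe.1 hy)).2
    have hWorth : ∀ i j, i ≠ j → ∀ x ∈ W i, ∀ y ∈ W j, ⟪x, y⟫ = 0 :=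
      fun i j hij x hx y hy => horth i j hij x (hWE i hx) y (hWE j hy)
    have hspanV : Submodule.span ℝ (V : Set E) = ⨆ j, W j := by
      rw [hVunion, Submodule.span_iUnion]
    have hrankV : Module.finrank ℝ (Submodule.span ℝ (V : Set E))
        = ∑ j : Fin k, Module.finrank ℝ (W j) := by
      rw [hspanV, ← Finset.sup_univ_eq_iSup]
      exact aux_finrank_sup W hWorth Finset.univ
    have hv0ne : v0 ≠ 0 := hΦ.nonzero v0 (hVΦ hv0)
    have hvsV : Module.finrank ℝ (Submodule.span ℝ (V : Set E))
        = Module.finrank ℝ (vectorSpan ℝ (V : Set E)) + 1 :=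
      aux_finrank_span (Finset.mem_coe.2 hv0) hv0ne (hnotvs v0 hv0)
    have hLHS : edim F = (Module.finrank ℝ (Submodule.span ℝ (V : Set E)) : ℤ) - 1 := by
      rw [edim, if_neg hFe]
      have hvs : vectorSpan ℝ F = vectorSpan ℝ (V : Set E) := by
        rw [hFV, ← direction_affineSpan, affineSpan_convexHull, direction_affineSpan]
      rw [hvs, hvsV]
      push_cast
      ring
    have hcomp : ∀ j, edim (F ∩ (Esub j : Set E)) = (Module.finrank ℝ (W j) : ℤ) - 1 := by
      intro j
      by_cases hVj : Vi j = ∅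
      · have hemp : F ∩ (Esub j : Set E) = ∅ := by
          rw [hFi j, hVj]
          simp
        rw [edim, if_pos hemp]
        have hWbot : W j = ⊥ := by
          show Submodule.span ℝ ((Vi j : Set E)) = ⊥
          rw [hVj]
          simp
        rw [hWbot, finrank_bot]
        norm_num
      · obtain ⟨u, hu⟩ := Finset.nonempty_iff_ne_empty.2 hVj
        have huV : u ∈ V := hViV j hu
        have hne' : F ∩ (Esub j : Set E) ≠ ∅ := by
          rw [hFi j, ← Set.nonempty_iff_ne_empty]
          exact ⟨u, subset_convexHull ℝ _ (Finset.mem_coe.2 hu)⟩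
        rw [edim, if_neg hne']
        have hvs : vectorSpan ℝ (F ∩ (Esub j : Set E)) = vectorSpan ℝ ((Vi j : Set E)) := by
          rw [hFi j, ← direction_affineSpan, affineSpan_convexHull, direction_affineSpan]
        have hnot : u ∉ vectorSpan ℝ ((Vi j : Set E)) := fun hmem =>
          hnotvs u huV (vectorSpan_mono ℝ (Finset.coe_subset.2 (hViV j)) hmem)
        have hrk : Module.finrank ℝ (Submodule.span ℝ ((Vi j : Set E)))
            = Module.finrank ℝ (vectorSpan ℝ ((Vi j : Set E))) + 1 :=
          aux_finrank_span (Finset.mem_coe.2 hu) (hΦ.nonzero u (hVΦ huV)) hnot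
        rw [hvs]
        have hWj : (Module.finrank ℝ (W j) : ℤ)
            = (Module.finrank ℝ (Submodule.span ℝ ((Vi j : Set E))) : ℤ) := rfl
        rw [hWj, hrk]
        push_cast
        ring
    rw [hLHS, Finset.sum_congr rfl (fun j _ => hcomp j), Finset.sum_sub_distrib,
      Finset.sum_const, Finset.card_univ, Fintype.card_fin]
    have hZ : (Module.finrank ℝ (Submodule.span ℝ (V : Set E)) : ℤ)
        = ∑ j : Fin k, (Module.finrank ℝ (W j) : ℤ) := by exact_mod_cast hrankV
    rw [hZ, nsmul_eq_mul]
    ring
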